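/- Let g ≥ 1 and let p be a polynomial with real coefficients of degree n = 2g, with coefficients c_i, such that c_0 > 0, p is palindromic (c_i = c_{n-i} for all 0 ≤ i ≤ n), and the coefficients of p alternate in sign ((-1)^i · c_i ≥ 0 for every i ≥ 0). If at least 2g - 2 of the complex roots of p, counted with multiplicity, lie on the unit circle, then every complex root z of p satisfies Re z > -1. -/

import Mathlib

/-- Let `g ≥ 1` and let `p` be a real polynomial of degree `2g` with positive
constant term, palindromic coefficients and coefficients alternating in sign.
If at least `2g - 2` of the complex roots of `p` (counted with multiplicity)
lie on the unit circle, then every complex root `z` of `p` satisfies `Re z > -1`. -/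
theorem stmt_1 (g : ℕ) (hg : 1 ≤ g) (p : Polynomial ℝ)
    (hdeg : p.natDegree = 2 * g)
    (h0 : 0 < p.coeff 0)
    (hpal : ∀ i ≤ p.natDegree, p.coeff i = p.coeff (p.natDegree - i))
    (halt : ∀ i : ℕ, 0 ≤ (-1 : ℝ) ^ i * p.coeff i)
    (hcirc : 2 * g - 2 ≤
      ((p.map (algebraMap ℝ ℂ)).roots.filter fun z => ‖z‖ = 1).card) :
    ∀ z : ℂ, Polynomial.aeval z p = 0 → -1 < z.re := by
  classical
  have hp0 : p ≠ 0 := by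
    intro h
    rw [h] at h0
    simp at h0
  -- positivity on nonpositive reals
  have hpos : ∀ x : ℝ, x ≤ 0 → 0 < p.eval x := by
    intro x hx
    rw [Polynomial.eval_eq_sum_range]
    apply Finset.sum_pos'
    · intro i _
      have h1 : ((-1 : ℝ)) ^ i * (-1 : ℝ) ^ i = 1 := by
        rw [← mul_pow]; norm_num
      have h2 : p.coeff i * x ^ i = ((-1) ^ i * p.coeff i) * (-x) ^ i := by
        rw [neg_pow x i]
        linear_combination (-(p.coeff i * x ^ i)) * h1
      rw [h2]
      exact mul_nonneg (halt i) (pow_nonneg (by linarith) i)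
    · refine ⟨0, by simp, by simpa using h0⟩
  intro z hz
  -- case: z is real
  by_cases him : z.im = 0
  · have hzre : z = ((z.re : ℝ) : ℂ) := by
      apply Complex.ext <;> simp [him]
    have : Polynomial.aeval ((z.re : ℝ) : ℂ) p = 0 := by rw [← hzre]; exact hz
    rw [← Complex.coe_algebraMap, Polynomial.aeval_algebraMap_apply] at this
    have h3 : Polynomial.aeval z.re p = 0 := by
      have := congrArg Complex.re this
      simpa using this
    rw [Polynomial.aeval_def, Polynomial.eval₂_eq_eval_map, Algebra.algebraMap_self, Polynomial.map_id] at h3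
    by_contra hc
    push_neg at hc
    exact absurd h3 (ne_of_gt (hpos z.re (by linarith)))
  -- z not real
  by_cases habs : ‖z‖ = 1
  · -- on the unit circle, not ±1
    have hns : Complex.normSq z = 1 := by
      have := congrArg (· ^ 2) habs
      simpa [Complex.sq_norm] using this
    have hre2 : z.re ^ 2 + z.im ^ 2 = 1 := by
      rw [Complex.normSq_apply] at hns; nlinarith
    have : z.im ^ 2 > 0 := by positivity
    nlinarith
  -- off-circle, non-real root: contradiction with root counting
  exfalso
  set P := p.map (algebraMap ℝ ℂ) with hP
  have hP0 : P ≠ 0 := Polynomial.map_ne_zero hp0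
  have hPdeg : P.natDegree = 2 * g := by
    rw [hP, Polynomial.natDegree_map_eq_of_injective (algebraMap ℝ ℂ).injective, hdeg]
  have hcard : Multiset.card P.roots = 2 * g := by
    rw [← hPdeg]
    exact (Polynomial.splits_iff_card_roots.mp (IsAlgClosed.splits P))
  have hz0 : z ≠ 0 := by
    intro h
    rw [h] at hz
    rw [Polynomial.aeval_def, Polynomial.eval₂_at_zero] at hz
    have : p.coeff 0 = 0 := by
      have := congrArg Complex.re hz
      simpa using this
    linarith
  -- p is its own reverse
  have hrev : p.reverse = p := by
    ext i
    rw [Polynomial.coeff_reverse]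
    rcases le_or_gt i p.natDegree with h | h
    · rw [Polynomial.revAt_le h, ← hpal i h]
    · rw [Polynomial.revAt_eq_self_of_lt h]
  -- roots
  have hzr : Polynomial.aeval z p = 0 := hz
  have hconj : Polynomial.aeval ((starRingEnd ℂ) z) p = 0 := by
    rw [Polynomial.aeval_conj, hz, map_zero]
  have hinv : Polynomial.aeval z⁻¹ p = 0 := by
    letI := invertibleOfNonzero hz0
    have := (Polynomial.eval₂_reverse_eq_zero_iff (algebraMap ℝ ℂ) z p).mpr
      (by rwa [Polynomial.aeval_def] at hz)
    rw [hrev, invOf_eq_inv] at this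
    rwa [Polynomial.aeval_def]
  have hconjinv : Polynomial.aeval ((starRingEnd ℂ) z)⁻¹ p = 0 := by
    rw [← map_inv₀, Polynomial.aeval_conj, hinv, map_zero]
  -- abs facts
  have habsconj : ‖(starRingEnd ℂ) z‖ = ‖z‖ := Complex.norm_conj z
  have habsinv : ‖z⁻¹‖ = ‖z‖⁻¹ := norm_inv z
  have habsinv' : ‖z‖⁻¹ ≠ 1 := by
    intro h
    exact habs (by rw [← inv_inv (‖z‖), h, inv_one])
  have habsconjinv : ‖((starRingEnd ℂ) z)⁻¹‖ = ‖z‖⁻¹ := by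
    rw [norm_inv, habsconj]
  -- distinctness
  have keyne : ∀ a b : ℂ, ‖a‖ = ‖z‖ →
      ‖b‖ = ‖z‖⁻¹ → a ≠ b := by
    intro a b ha hb hab
    rw [hab, hb] at ha
    have hz' : ‖z‖ ≠ 0 := norm_ne_zero_iff.mpr hz0
    have h1 : ‖z‖ * ‖z‖ = 1 := by
      have h2 := congrArg (· * ‖z‖) ha
      simpa [inv_mul_cancel₀ hz'] using h2.symm
    rcases mul_self_eq_one_iff.mp h1 with h | h
    · exact habs h
    · have := norm_nonneg z
      linarith
  have hne1 : z ≠ (starRingEnd ℂ) z := by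
    intro h
    exact him (Complex.conj_eq_iff_im.mp h.symm)
  have hne2 : z ≠ z⁻¹ := keyne z z⁻¹ rfl habsinv
  have hne3 : z ≠ ((starRingEnd ℂ) z)⁻¹ := keyne z _ rfl habsconjinv
  have hne4 : (starRingEnd ℂ) z ≠ z⁻¹ := keyne _ _ habsconj habsinv
  have hne5 : (starRingEnd ℂ) z ≠ ((starRingEnd ℂ) z)⁻¹ := keyne _ _ habsconj habsconjinv
  have hne6 : z⁻¹ ≠ ((starRingEnd ℂ) z)⁻¹ := by
    intro h
    exact hne1 (inv_injective h)
  -- four distinct off-circle roots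
  set S : Multiset ℂ := {z, (starRingEnd ℂ) z, z⁻¹, ((starRingEnd ℂ) z)⁻¹} with hS
  have hSnodup : S.Nodup := by
    simp only [hS, Multiset.insert_eq_cons, Multiset.nodup_cons, Multiset.mem_cons,
      Multiset.mem_singleton, Multiset.nodup_singleton, and_true, not_or]
    exact ⟨⟨hne1, hne2, hne3⟩, ⟨hne4, hne5⟩, hne6⟩
  have hmem : ∀ a : ℂ, Polynomial.aeval a p = 0 → ‖a‖ ≠ 1 →
      a ∈ P.roots.filter (fun w => ¬ ‖w‖ = 1) := by
    intro a ha hna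
    rw [Multiset.mem_filter]
    refine ⟨(Polynomial.mem_roots hP0).mpr ?_, hna⟩
    show Polynomial.eval a P = 0
    rw [hP, Polynomial.eval_map, ← Polynomial.aeval_def]
    exact ha
  have hsub : S ⊆ P.roots.filter (fun w => ¬ ‖w‖ = 1) := by
    intro a haS
    simp only [hS, Multiset.insert_eq_cons, Multiset.mem_cons, Multiset.mem_singleton] at haS
    rcases haS with rfl | rfl | rfl | rfl
    · exact hmem _ hzr habs
    · exact hmem _ hconj (by rw [habsconj]; exact habs)
    · exact hmem _ hinv (by rw [habsinv]; exact habsinv')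
    · exact hmem _ hconjinv (by rw [habsconjinv]; exact habsinv')
  have hle : S ≤ P.roots.filter (fun w => ¬ ‖w‖ = 1) :=
    (Multiset.le_iff_subset hSnodup).mpr hsub
  have hcard4 : (4 : ℕ) ≤ (P.roots.filter (fun w => ¬ ‖w‖ = 1)).card := by
    have := Multiset.card_le_card hle
    simpa [hS] using this
  have hsplit : (P.roots.filter (fun w => ‖w‖ = 1)).card +
      (P.roots.filter (fun w => ¬ ‖w‖ = 1)).card = 2 * g := by
    rw [← Multiset.card_add, Multiset.filter_add_not, hcard]
  have hcle : (P.roots.filter (fun w => ‖w‖ = 1)).card ≤ 2 * g := by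
    omega
  have hcirc' : 2 * g - 2 ≤ (P.roots.filter (fun w => ‖w‖ = 1)).card := hcirc
  omega
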